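/- Let n ≥ 1, w : {1,…,n} → ℕ, and c ∈ ℕ. Define w̃_j = 2^{n−j} + 2ⁿ·w_j, w̄_j = 2^{n−j}, c̄ = 2ⁿ·c + 2ⁿ − 1, and S = { w̃_j : 1 ≤ j ≤ n } ∪ { w̄_j : 1 ≤ j ≤ n }. Then there exists x : {1,…,n} → {0,1} with Σ_{j=1}^{n} w_j·x_j = c if and only if there exists s : {0,…,n−1} → ℕ with s(i) ∈ S ∪ {0} for all i and Σ_{i=0}^{n−1} s(i) = c̄. In particular, the subset-sum instance (w, c) is a yes-instance if and only if the constructed energy-allocation decision instance (with K = n+1 slots, capacity C = c̄, B₀ = B_K = 0, harvests Q(0) = c̄ and Q(i) = 0 for i ≥ 1, spending set S, identity utility, and utility threshold c̄) is a yes-instance. -/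
import Mathlib


/-- Battery level evolution (in `ℤ`) with unit conversion efficiency and no
leakage: initial level `B₀`, capacity `C`, harvests `Q`, spending vector `s`. -/
def batteryLevelNL (B₀ C : ℕ) (Q : ℕ → ℕ) (s : ℕ → ℕ) : ℕ → ℤ
  | 0 => (B₀ : ℤ)
  | i + 1 => min (batteryLevelNL B₀ C Q s i + (Q i : ℤ) - (s i : ℤ)) (C : ℤ)

/-- Feasibility of a spending vector `s` over horizon `K`, capacity `C`,
initial level `B₀`, final requirement `BK`, harvests `Q`, and
spending-rate set `S`, with no leakage. -/
def FeasibleNL (K C B₀ BK : ℕ) (Q : ℕ → ℕ) (S : Set ℕ) (s : ℕ → ℕ) : Prop :=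
  (∀ i < K, s i ∈ S ∪ {0}) ∧
  (∀ i < K, (s i : ℤ) ≤ batteryLevelNL B₀ C Q s i) ∧
  (∀ i ≤ K, 0 ≤ batteryLevelNL B₀ C Q s i) ∧
  (BK : ℤ) ≤ batteryLevelNL B₀ C Q s K

section helpersNPC
open Finset

def bc (n : ℕ) : ℕ := (Nat.digits 2 n).sum

lemma bc_zero : bc 0 = 0 := by simp [bc]

lemma bc_eq {n : ℕ} (hn : n ≠ 0) : bc n = n % 2 + bc (n / 2) := by
  unfold bc
  rw [Nat.digits_def' (by norm_num : 1 < 2) (Nat.pos_of_ne_zero hn), List.sum_cons]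

lemma bc_two_mul_add (n r : ℕ) (hr : r < 2) : bc (2 * n + r) = bc n + r := by
  rcases Nat.eq_zero_or_pos (2 * n + r) with h | h
  · have hn : n = 0 := by omega
    have hr0 : r = 0 := by omega
    simp [hn, hr0, bc_zero]
  · rw [bc_eq (by omega)]
    have h1 : (2 * n + r) % 2 = r := by omega
    have h2 : (2 * n + r) / 2 = n := by omega
    rw [h1, h2, Nat.add_comm]

lemma bc_one : bc 1 = 1 := by rw [bc_eq one_ne_zero]; simp [bc_zero]

lemma bc_pow (a : ℕ) : bc (2 ^ a) = 1 := by
  induction a with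
  | zero => simpa using bc_one
  | succ a ih =>
    have h : 2 ^ (a + 1) = 2 * 2 ^ a + 0 := by ring
    rw [h, bc_two_mul_add _ _ (by norm_num), ih]

lemma bc_eq_zero : ∀ n, bc n = 0 → n = 0 := by
  intro n
  induction n using Nat.strong_induction_on with
  | _ n ih =>
    intro h
    by_contra hn
    rw [bc_eq hn] at h
    have h2 : n / 2 = 0 :=
      ih (n / 2) (Nat.div_lt_self (Nat.pos_of_ne_zero hn) one_lt_two) (by omega)
    omega

lemma bc_add_aux : ∀ m a b, a + b ≤ m → bc (a + b) ≤ bc a + bc b := by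
  intro m
  induction m with
  | zero => intro a b h
            have : a = 0 ∧ b = 0 := by omega
            simp [this.1, this.2, bc_zero]
  | succ m ih =>
    intro a b hab
    rcases Nat.eq_zero_or_pos a with ha | ha
    · simp [ha]
    rcases Nat.eq_zero_or_pos b with hb | hb
    · simp [hb]
    have hqa := Nat.div_add_mod a 2
    have hqb := Nat.div_add_mod b 2
    set qa := a / 2 with hqa'
    set ra := a % 2 with hra'
    set qb := b / 2 with hqb'
    set rb := b % 2 with hrb'
    have hra : ra < 2 := by omega
    have hrb : rb < 2 := by omega
    have hba : bc a = bc qa + ra := by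
      rw [← bc_two_mul_add qa ra hra]; congr 1; omega
    have hbb : bc b = bc qb + rb := by
      rw [← bc_two_mul_add qb rb hrb]; congr 1; omega
    by_cases hsr : ra + rb ≤ 1
    · have heq : a + b = 2 * (qa + qb) + (ra + rb) := by omega
      rw [heq, bc_two_mul_add _ _ (by omega)]
      have := ih qa qb (by omega)
      omega
    · have hra1 : ra = 1 := by omega
      have hrb1 : rb = 1 := by omega
      have heq : a + b = 2 * (qa + qb + 1) + 0 := by omega
      rw [heq, bc_two_mul_add _ _ (by norm_num)]
      have h1 : bc (qa + qb + 1) ≤ bc (qa + qb) + bc 1 := ih (qa + qb) 1 (by omega)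
      have h2 : bc (qa + qb) ≤ bc qa + bc qb := ih qa qb (by omega)
      have hb1 : bc 1 = 1 := bc_one
      omega

lemma bc_add (a b : ℕ) : bc (a + b) ≤ bc a + bc b := bc_add_aux (a + b) a b le_rfl

lemma bc_sum {ι : Type*} (F : Finset ι) (f : ι → ℕ) :
    bc (∑ i ∈ F, f i) ≤ ∑ i ∈ F, bc (f i) := by
  induction F using Finset.cons_induction with
  | empty => simp [bc_zero]
  | cons a s ha ih =>
    rw [Finset.sum_cons, Finset.sum_cons]
    exact le_trans (bc_add _ _) (Nat.add_le_add_left ih _)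

lemma bc_pow_mul (n q : ℕ) : bc (2 ^ n * (q + 1) - 1) = n + bc q := by
  induction n with
  | zero => simp
  | succ n ih =>
    have hpos : 1 ≤ 2 ^ n * (q + 1) := Nat.one_le_iff_ne_zero.mpr (by positivity)
    have h : 2 ^ (n + 1) * (q + 1) - 1 = 2 * (2 ^ n * (q + 1) - 1) + 1 := by
      have h2 : 2 ^ (n + 1) * (q + 1) = 2 * (2 ^ n * (q + 1)) := by ring
      omega
    rw [h, bc_two_mul_add _ _ one_lt_two, ih]
    omega

lemma key_lemma (n : ℕ) (t : ℕ → ℕ)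
    (hv : ∀ i < n, t i = 0 ∨ ∃ a, a < n ∧ t i = 2 ^ a)
    (hmod : (∑ i ∈ range n, t i) % 2 ^ n = 2 ^ n - 1) :
    ∃ a : ℕ → ℕ,
      (∀ i < n, a i < n ∧ t i = 2 ^ a i) ∧
      (∀ i < n, ∀ i' < n, a i = a i' → i = i') ∧
      (∀ b < n, ∃ i < n, a i = b) ∧
      ∑ i ∈ range n, t i = 2 ^ n - 1 := by
  have hP : 0 < 2 ^ n := Nat.two_pow_pos n
  set T := ∑ i ∈ range n, t i with hT
  have hbc1 : ∀ i ∈ range n, bc (t i) ≤ 1 := by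
    intro i hi
    rcases hv i (mem_range.mp hi) with h0 | ⟨a, _, ha⟩
    · simp [h0, bc_zero]
    · simp [ha, bc_pow]
  have hbcT : bc T ≤ n := by
    calc bc T ≤ ∑ i ∈ range n, bc (t i) := bc_sum _ _
    _ ≤ ∑ _i ∈ range n, 1 := Finset.sum_le_sum hbc1
    _ = n := by simp
  have hdm := Nat.div_add_mod T (2 ^ n)
  set q := T / 2 ^ n with hq
  have hTeq : T = 2 ^ n * (q + 1) - 1 := by
    rw [hmod] at hdm
    have h2 : 2 ^ n * (q + 1) = 2 ^ n * q + 2 ^ n := by ring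
    omega
  have hbceq : bc T = n + bc q := by rw [hTeq]; exact bc_pow_mul n q
  have hq0 : q = 0 := bc_eq_zero q (by omega)
  have hT1 : T = 2 ^ n - 1 := by rw [hTeq, hq0]; omega
  have hbcTn : bc T = n := by omega
  have hnz : ∀ i < n, ∃ a, a < n ∧ t i = 2 ^ a := by
    intro i hi
    rcases hv i hi with h0 | h
    · exfalso
      have hmem : i ∈ range n := mem_range.mpr hi
      have hsum : T = ∑ j ∈ (range n).erase i, t j := by
        rw [hT, ← Finset.add_sum_erase _ _ hmem, h0, zero_add]
      have h1 : bc T ≤ ∑ j ∈ (range n).erase i, bc (t j) := hsum ▸ bc_sum _ _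
      have h2 : ∑ j ∈ (range n).erase i, bc (t j) ≤ ((range n).erase i).card := by
        refine le_trans (Finset.sum_le_sum fun j hj => hbc1 j (Finset.mem_of_mem_erase hj)) ?_
        simp
      have h3 : ((range n).erase i).card = n - 1 := by
        rw [Finset.card_erase_of_mem hmem, Finset.card_range]
      omega
    · exact h
  set a : ℕ → ℕ := fun i => Nat.log 2 (t i) with haf
  have ha : ∀ i < n, a i < n ∧ t i = 2 ^ a i := by
    intro i hi
    obtain ⟨e, he, hte⟩ := hnz i hi
    have hae : a i = e := by rw [haf]; simp [hte, Nat.log_pow]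
    rw [hae]; exact ⟨he, hte⟩
  have hinj : ∀ i < n, ∀ i' < n, a i = a i' → i = i' := by
    intro i hi i' hi' hae
    by_contra hne
    have hmem : i ∈ range n := mem_range.mpr hi
    have hmem' : i' ∈ (range n).erase i :=
      Finset.mem_erase.mpr ⟨fun h => hne h.symm, mem_range.mpr hi'⟩
    have hsplit : T = t i + (t i' + ∑ j ∈ ((range n).erase i).erase i', t j) := by
      rw [hT, ← Finset.add_sum_erase _ _ hmem, ← Finset.add_sum_erase _ _ hmem']
    have hpow : t i + t i' = 2 ^ (a i + 1) := by
      rw [(ha i hi).2, (ha i' hi').2, ← hae, pow_succ]; ring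
    have h1 : bc T ≤ bc (t i + t i') + bc (∑ j ∈ ((range n).erase i).erase i', t j) := by
      rw [hsplit, ← add_assoc]; exact bc_add _ _
    have h2 : bc (t i + t i') = 1 := by rw [hpow, bc_pow]
    have hcard : (((range n).erase i).erase i').card = n - 2 := by
      rw [Finset.card_erase_of_mem hmem', Finset.card_erase_of_mem hmem, Finset.card_range]
      omega
    have h3 : bc (∑ j ∈ ((range n).erase i).erase i', t j) ≤ n - 2 := by
      refine le_trans (bc_sum _ _) ?_
      refine le_trans (Finset.sum_le_sum fun j hj =>
        hbc1 j (Finset.mem_of_mem_erase (Finset.mem_of_mem_erase hj))) ?_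
      simp [hcard]
    have hn2 : 2 ≤ n := by omega
    omega
  have hsurj : ∀ b < n, ∃ i < n, a i = b := by
    intro b hb
    have hinj' : Set.InjOn a ↑(range n) := fun i hi i' hi' h =>
      hinj i (by simpa using hi) i' (by simpa using hi') h
    have himage : (range n).image a = range n := by
      apply Finset.eq_of_subset_of_card_le
      · intro x hx
        obtain ⟨i, hi, rfl⟩ := Finset.mem_image.mp hx
        exact mem_range.mpr (ha i (mem_range.mp hi)).1
      · rw [Finset.card_image_of_injOn hinj', Finset.card_range]
    have hb' : b ∈ (range n).image a := by rw [himage]; exact mem_range.mpr hb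
    obtain ⟨i, hi, hai⟩ := Finset.mem_image.mp hb'
    exact ⟨i, mem_range.mp hi, hai⟩
  exact ⟨a, ha, hinj, hsurj, hT1⟩

lemma geom2 (n : ℕ) : ∑ i ∈ range n, 2 ^ i = 2 ^ n - 1 := by
  induction n with
  | zero => simp
  | succ n ih =>
    rw [Finset.sum_range_succ, ih, pow_succ]
    have := Nat.two_pow_pos n
    omega

lemma part1 (n : ℕ) (hn : 1 ≤ n) (w : ℕ → ℕ) (c : ℕ)
    (cbar : ℕ) (hcbar : cbar = 2 ^ n * c + 2 ^ n - 1)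
    (S : Finset ℕ)
    (hS : S = (Finset.Icc 1 n).image (fun j => 2 ^ (n - j) + 2 ^ n * w j) ∪
              (Finset.Icc 1 n).image (fun j => 2 ^ (n - j))) :
    (∃ x : ℕ → ℕ, (∀ j ∈ Finset.Icc 1 n, x j = 0 ∨ x j = 1) ∧
        ∑ j ∈ Finset.Icc 1 n, w j * x j = c) ↔
      (∃ s : ℕ → ℕ, (∀ i < n, s i ∈ (↑S : Set ℕ) ∪ {0}) ∧
        ∑ i ∈ Finset.range n, s i = cbar) := by
  have hP : 0 < 2 ^ n := Nat.two_pow_pos n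
  constructor
  · rintro ⟨x, hx01, hxsum⟩
    refine ⟨fun i => 2 ^ (n - (i + 1)) + 2 ^ n * (w (i + 1) * x (i + 1)), ?_, ?_⟩
    · intro i hi
      have hmem : i + 1 ∈ Finset.Icc 1 n := by rw [Finset.mem_Icc]; omega
      left
      rw [hS]
      rcases hx01 (i + 1) hmem with h0 | h1
      · refine Finset.mem_coe.mpr (Finset.mem_union_right _ (Finset.mem_image.mpr ⟨i + 1, hmem, ?_⟩))
        simp [h0]
      · refine Finset.mem_coe.mpr (Finset.mem_union_left _ (Finset.mem_image.mpr ⟨i + 1, hmem, ?_⟩))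
        simp [h1]
    · rw [Finset.sum_add_distrib, ← Finset.mul_sum]
      have h1 : ∑ i ∈ range n, 2 ^ (n - (i + 1)) = 2 ^ n - 1 := by
        calc ∑ i ∈ range n, 2 ^ (n - (i + 1))
            = ∑ i ∈ range n, 2 ^ (n - 1 - i) := by
              refine Finset.sum_congr rfl fun i _ => ?_
              congr 1
              omega
          _ = ∑ i ∈ range n, 2 ^ i := Finset.sum_range_reflect (fun i => 2 ^ i) n
          _ = 2 ^ n - 1 := geom2 n
      have h2 : ∑ i ∈ range n, w (i + 1) * x (i + 1) = c := by
        rw [← hxsum, ← Finset.Ico_add_one_right_eq_Icc, Finset.sum_Ico_eq_sum_range]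
        have hnn : n + 1 - 1 = n := by omega
        rw [hnn]
        exact Finset.sum_congr rfl fun i _ => by rw [Nat.add_comm 1 i]
      rw [h1, h2, hcbar]
      omega
  · rintro ⟨s, hmem, hsum⟩
    classical
    have hcases : ∀ i < n, s i = 0 ∨ ∃ j, 1 ≤ j ∧ j ≤ n ∧
        (s i = 2 ^ (n - j) + 2 ^ n * w j ∨ s i = 2 ^ (n - j)) := by
      intro i hi
      rcases hmem i hi with hPS | h0
      · rw [hS] at hPS
        simp only [Finset.coe_union, Set.mem_union, Finset.mem_coe, Finset.mem_union,
          Finset.mem_image, Finset.mem_Icc] at hPS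
        rcases hPS with ⟨j, ⟨hj1, hj2⟩, hje⟩ | ⟨j, ⟨hj1, hj2⟩, hje⟩
        · exact Or.inr ⟨j, hj1, hj2, Or.inl hje.symm⟩
        · exact Or.inr ⟨j, hj1, hj2, Or.inr hje.symm⟩
      · exact Or.inl h0
    set t : ℕ → ℕ := fun i => s i % 2 ^ n with ht
    set hh : ℕ → ℕ := fun i => s i / 2 ^ n with hhh
    have hsplit : ∀ i, s i = 2 ^ n * hh i + t i := fun i => (Nat.div_add_mod (s i) (2 ^ n)).symm
    have hlt : ∀ j, 1 ≤ j → j ≤ n → 2 ^ (n - j) < 2 ^ n := by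
      intro j h1 h2
      exact Nat.pow_lt_pow_right one_lt_two (by omega)
    -- compute t and hh in each case
    have hti : ∀ i < n, (t i = 0 ∧ hh i = 0) ∨ ∃ j, 1 ≤ j ∧ j ≤ n ∧ t i = 2 ^ (n - j) ∧
        ((s i = 2 ^ (n - j) + 2 ^ n * w j ∧ hh i = w j) ∨ (s i = 2 ^ (n - j) ∧ hh i = 0)) := by
      intro i hi
      rcases hcases i hi with h0 | ⟨j, hj1, hj2, hc⟩
      · left
        constructor
        · rw [ht]; simp [h0]
        · rw [hhh]; simp [h0]
      · right
        refine ⟨j, hj1, hj2, ?_, ?_⟩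
        · rcases hc with hc | hc
          · rw [ht]; simp only []
            rw [hc, Nat.add_mul_mod_self_left, Nat.mod_eq_of_lt (hlt j hj1 hj2)]
          · rw [ht]; simp only []
            rw [hc, Nat.mod_eq_of_lt (hlt j hj1 hj2)]
        · rcases hc with hc | hc
          · left
            refine ⟨hc, ?_⟩
            rw [hhh]; simp only []
            rw [hc, Nat.add_mul_div_left _ _ hP, Nat.div_eq_of_lt (hlt j hj1 hj2), zero_add]
          · right
            refine ⟨hc, ?_⟩
            rw [hhh]; simp only []
            rw [hc, Nat.div_eq_of_lt (hlt j hj1 hj2)]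
    have hsum2 : 2 ^ n * (∑ i ∈ range n, hh i) + (∑ i ∈ range n, t i) = cbar := by
      rw [← hsum, Finset.mul_sum, ← Finset.sum_add_distrib]
      exact Finset.sum_congr rfl fun i _ => (hsplit i).symm
    have hmodT : (∑ i ∈ range n, t i) % 2 ^ n = 2 ^ n - 1 := by
      have h1 : cbar % 2 ^ n = 2 ^ n - 1 := by
        rw [hcbar]
        have h2 : 2 ^ n * c + 2 ^ n - 1 = 2 ^ n * c + (2 ^ n - 1) := by omega
        rw [h2, Nat.mul_add_mod]
        exact Nat.mod_eq_of_lt (by omega)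
      calc (∑ i ∈ range n, t i) % 2 ^ n
          = (2 ^ n * (∑ i ∈ range n, hh i) + ∑ i ∈ range n, t i) % 2 ^ n :=
            (Nat.mul_add_mod _ _ _).symm
        _ = cbar % 2 ^ n := by rw [hsum2]
        _ = 2 ^ n - 1 := h1
    have hv : ∀ i < n, t i = 0 ∨ ∃ a, a < n ∧ t i = 2 ^ a := by
      intro i hi
      rcases hti i hi with ⟨h0, _⟩ | ⟨j, hj1, hj2, htj, _⟩
      · exact Or.inl h0
      · exact Or.inr ⟨n - j, by omega, htj⟩
    obtain ⟨a, ha, hinj, hsurjA, hT⟩ := key_lemma n t hv hmodT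
    have hHc : ∑ i ∈ range n, hh i = c := by
      rw [hT] at hsum2
      have h3 : cbar = 2 ^ n * c + (2 ^ n - 1) := by rw [hcbar]; omega
      rw [h3] at hsum2
      have h4 : 2 ^ n * (∑ i ∈ range n, hh i) = 2 ^ n * c := by omega
      exact Nat.eq_of_mul_eq_mul_left hP h4
    refine ⟨fun j => if (∃ i, i < n ∧ s i = 2 ^ (n - j) + 2 ^ n * w j) ∧ w j ≠ 0
      then 1 else 0, ?_, ?_⟩
    · intro j _
      by_cases h : (∃ i, i < n ∧ s i = 2 ^ (n - j) + 2 ^ n * w j) ∧ w j ≠ 0 <;> simp [h]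
    · rw [← hHc]
      refine (Finset.sum_bij (fun i _ => n - a i) ?_ ?_ ?_ ?_).symm
      · intro i hi
        have := (ha i (mem_range.mp hi)).1
        show n - a i ∈ Finset.Icc 1 n
        rw [Finset.mem_Icc]
        omega
      · intro i1 h1 i2 h2 he
        have he' : n - a i1 = n - a i2 := he
        have ha1 := (ha i1 (mem_range.mp h1)).1
        have ha2 := (ha i2 (mem_range.mp h2)).1
        exact hinj i1 (mem_range.mp h1) i2 (mem_range.mp h2) (by omega)
      · intro j hj
        rw [Finset.mem_Icc] at hj
        obtain ⟨i, hi, hai⟩ := hsurjA (n - j) (by omega)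
        exact ⟨i, mem_range.mpr hi, show n - a i = j by omega⟩
      · intro i hi'
        dsimp only
        have hi : i < n := mem_range.mp hi'
        obtain ⟨hain, htai⟩ := ha i hi
        have htnz : t i ≠ 0 := by rw [htai]; positivity
        rcases hti i hi with ⟨h0, _⟩ | ⟨j, hj1, hj2, htj, hc⟩
        · exact absurd h0 htnz
        · -- a i = n - j, so n - a i = j
          have haij : a i = n - j := by
            have : (2 : ℕ) ^ a i = 2 ^ (n - j) := by rw [← htai, htj]
            exact Nat.pow_right_injective le_rfl this
          have hji : n - a i = j := by omega
          rw [hji]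
          rcases hc with ⟨hsi, hhi⟩ | ⟨hsi, hhi⟩
          · -- hh i = w j, x j should give w j
            rw [hhi]
            by_cases hw : w j = 0
            · simp [hw]
            · rw [if_pos ⟨⟨i, hi, hsi⟩, hw⟩, mul_one]
          · -- hh i = 0, need w j * x j = 0
            rw [hhi]
            by_cases hw : w j = 0
            · simp [hw]
            · rw [if_neg, mul_zero]
              rintro ⟨⟨i2, hi2, hsi2⟩, -⟩
              have hti2 : t i2 = 2 ^ (n - j) := by
                rw [ht]; simp only []
                rw [hsi2, Nat.add_mul_mod_self_left, Nat.mod_eq_of_lt (hlt j hj1 hj2)]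
              have hai2 : a i2 = a i := by
                have h5 : (2:ℕ) ^ (a i2) = 2 ^ (a i) := by
                  rw [← (ha i2 hi2).2, hti2, ← htai, htj]
                exact Nat.pow_right_injective le_rfl h5
              have : i2 = i := hinj i2 hi2 i hi hai2
              rw [this, hsi] at hsi2
              have hwpos : 0 < 2 ^ n * w j := by positivity
              omega

lemma batteryLevelNL_zero (B₀ C : ℕ) (Q s : ℕ → ℕ) :
    batteryLevelNL B₀ C Q s 0 = (B₀ : ℤ) := rfl

lemma batteryLevelNL_succ (B₀ C : ℕ) (Q s : ℕ → ℕ) (i : ℕ) :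
    batteryLevelNL B₀ C Q s (i + 1) =
      min (batteryLevelNL B₀ C Q s i + (Q i : ℤ) - (s i : ℤ)) (C : ℤ) := rfl

lemma batt_upper (B₀ C : ℕ) (Q s : ℕ → ℕ) (i : ℕ) :
    batteryLevelNL B₀ C Q s i ≤ (B₀ : ℤ) + ∑ k ∈ range i, ((Q k : ℤ) - (s k : ℤ)) := by
  induction i with
  | zero => simp [batteryLevelNL_zero]
  | succ i ih =>
    rw [batteryLevelNL_succ, Finset.sum_range_succ]
    refine le_trans (min_le_left _ _) ?_
    linarith

lemma batt_exact (cbar : ℕ) (Q s : ℕ → ℕ) (hQ0 : Q 0 = cbar) (hQ : ∀ i, 1 ≤ i → Q i = 0)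
    (hs0 : s 0 = 0) (i : ℕ) :
    batteryLevelNL 0 cbar Q s (i + 1) = (cbar : ℤ) - ∑ k ∈ range (i + 1), (s k : ℤ) := by
  induction i with
  | zero =>
    rw [batteryLevelNL_succ, batteryLevelNL_zero, hQ0]
    simp [hs0]
  | succ i ih =>
    rw [batteryLevelNL_succ, ih, hQ (i + 1) (by omega), Finset.sum_range_succ _ (i + 1)]
    have hnn : (0 : ℤ) ≤ ∑ k ∈ range (i + 1), (s k : ℤ) + (s (i + 1) : ℤ) := by positivity
    rw [min_eq_left (by push_cast; linarith [Int.natCast_nonneg cbar])]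
    push_cast
    ring

lemma part2 (n : ℕ) (cbar : ℕ) (S : Finset ℕ)
    (Q : ℕ → ℕ) (hQ0 : Q 0 = cbar) (hQ : ∀ i, 1 ≤ i → Q i = 0) :
    (∃ s : ℕ → ℕ, (∀ i < n, s i ∈ (↑S : Set ℕ) ∪ {0}) ∧ ∑ i ∈ range n, s i = cbar) ↔
    (∃ s : ℕ → ℕ, FeasibleNL (n + 1) cbar 0 0 Q (↑S) s ∧
      cbar ≤ ∑ i ∈ range (n + 1), s i) := by
  constructor
  · rintro ⟨s, hmem, hsum⟩
    classical
    set s' : ℕ → ℕ := fun i => if i = 0 then 0 else s (i - 1) with hs'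
    have hs'0 : s' 0 = 0 := by simp [hs']
    have hs'succ : ∀ k, s' (k + 1) = s k := by intro k; simp [hs']
    have hshift : ∀ m, ∑ k ∈ range (m + 1), s' k = ∑ k ∈ range m, s k := by
      intro m
      rw [Finset.sum_range_succ']
      simp [hs'succ, hs'0]
    have hpart : ∀ m, m ≤ n → ∑ k ∈ range m, s k ≤ cbar := by
      intro m hm
      rw [← hsum]
      exact Finset.sum_le_sum_of_subset (Finset.range_subset_range.mpr hm)
    have hbatt : ∀ i, batteryLevelNL 0 cbar Q s' (i + 1) =
        (cbar : ℤ) - ∑ k ∈ range (i + 1), (s' k : ℤ) :=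
      batt_exact cbar Q s' hQ0 hQ hs'0
    have hcast : ∀ m, (∑ k ∈ range m, (s' k : ℤ)) = ((∑ k ∈ range m, s' k : ℕ) : ℤ) := by
      intro m; push_cast; ring
    refine ⟨s', ⟨?_, ?_, ?_, ?_⟩, ?_⟩
    · intro i hi
      match i with
      | 0 => right; simp [hs'0]
      | k + 1 =>
        rw [hs'succ]
        exact hmem k (by omega)
    · intro i hi
      match i with
      | 0 => simp [batteryLevelNL_zero, hs'0]
      | k + 1 =>
        rw [hbatt k, hcast, hshift]
        have h1 : ∑ j ∈ range (k + 1), s j ≤ cbar := hpart (k + 1) (by omega)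
        have h2 : ∑ j ∈ range (k + 1), s j = ∑ j ∈ range k, s j + s k :=
          Finset.sum_range_succ _ _
        rw [hs'succ]
        omega
    · intro i hi
      match i with
      | 0 => rw [batteryLevelNL_zero]; simp
      | k + 1 =>
        rw [hbatt k, hcast, hshift]
        have h1 : ∑ j ∈ range k, s j ≤ cbar := hpart k (by omega)
        omega
    · rw [hbatt n, hcast, hshift, hsum]
      simp
    · rw [hshift, hsum]
  · rintro ⟨s', ⟨hmem', hle', hge', hfin'⟩, hthr⟩
    have hs'0 : s' 0 = 0 := by
      have h := hle' 0 (by omega)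
      rw [batteryLevelNL_zero] at h
      omega
    have hQsum : ∑ k ∈ range (n + 1), (Q k : ℤ) = (cbar : ℤ) := by
      rw [Finset.sum_range_succ']
      have h1 : ∀ k ∈ range n, (Q (k + 1) : ℤ) = 0 := by
        intro k _
        rw [hQ (k + 1) (by omega)]
        simp
      rw [Finset.sum_congr rfl h1, hQ0]
      simp
    have hup := batt_upper 0 cbar Q s' (n + 1)
    have hsub : ∑ k ∈ range (n + 1), ((Q k : ℤ) - (s' k : ℤ)) =
        (cbar : ℤ) - ∑ k ∈ range (n + 1), (s' k : ℤ) := by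
      rw [Finset.sum_sub_distrib, hQsum]
    have hle2 : (∑ k ∈ range (n + 1), s' k : ℕ) ≤ cbar := by
      have h3 : (0 : ℤ) ≤ batteryLevelNL 0 cbar Q s' (n + 1) := hge' (n + 1) le_rfl
      rw [hsub] at hup
      have h4 : ((∑ k ∈ range (n + 1), s' k : ℕ) : ℤ) = ∑ k ∈ range (n + 1), (s' k : ℤ) := by
        push_cast; ring
      omega
    have hsum' : ∑ k ∈ range (n + 1), s' k = cbar := le_antisymm hle2 hthr
    refine ⟨fun i => s' (i + 1), ?_, ?_⟩
    · intro i hi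
      exact hmem' (i + 1) (by omega)
    · show ∑ i ∈ range n, s' (i + 1) = cbar
      have := Finset.sum_range_succ' s' n
      omega

end helpersNPC

/-- The core of the NP-hardness reduction: the subset-sum instance `(w, c)` is
a yes-instance iff `n` slots can be filled with values from `S ∪ {0}` summing
to `c̄`, where `S = {w̃_j} ∪ {w̄_j}` with `w̃_j = 2^{n−j} + 2ⁿ·w_j`,
`w̄_j = 2^{n−j}`, and `c̄ = 2ⁿ·c + 2ⁿ − 1`; and, in particular, iff the
constructed energy-allocation decision instance (with `K = n+1`, `C = c̄`,
`B₀ = B_K = 0`, `Q(0) = c̄`, `Q(i) = 0` for `i ≥ 1`, identity utility,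
threshold `c̄`) is a yes-instance. -/
theorem subset_sum_iff_energy_allocation
    (n : ℕ) (hn : 1 ≤ n) (w : ℕ → ℕ) (c : ℕ)
    (cbar : ℕ) (hcbar : cbar = 2 ^ n * c + 2 ^ n - 1)
    (S : Finset ℕ)
    (hS : S = (Finset.Icc 1 n).image (fun j => 2 ^ (n - j) + 2 ^ n * w j) ∪
              (Finset.Icc 1 n).image (fun j => 2 ^ (n - j)))
    (Q : ℕ → ℕ) (hQ0 : Q 0 = cbar) (hQ : ∀ i, 1 ≤ i → Q i = 0) :
    ((∃ x : ℕ → ℕ, (∀ j ∈ Finset.Icc 1 n, x j = 0 ∨ x j = 1) ∧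
        ∑ j ∈ Finset.Icc 1 n, w j * x j = c) ↔
      (∃ s : ℕ → ℕ, (∀ i < n, s i ∈ (↑S : Set ℕ) ∪ {0}) ∧
        ∑ i ∈ Finset.range n, s i = cbar)) ∧
    ((∃ x : ℕ → ℕ, (∀ j ∈ Finset.Icc 1 n, x j = 0 ∨ x j = 1) ∧
        ∑ j ∈ Finset.Icc 1 n, w j * x j = c) ↔
      (∃ s : ℕ → ℕ, FeasibleNL (n + 1) cbar 0 0 Q (↑S) s ∧
        cbar ≤ ∑ i ∈ Finset.range (n + 1), s i)) :=
  ⟨part1 n hn w c cbar hcbar S hS,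
   (part1 n hn w c cbar hcbar S hS).trans (part2 n cbar S Q hQ0 hQ)⟩
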